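/- Let B be a separable complex Banach space and let (T t)_{t≥0} be a C₀-semigroup on B. Suppose there exist an open connected set Ω ⊆ ℂ with Ω ∩ iℝ ≠ ∅ and a map F : Ω → B with F not identically zero, such that (i) for every λ ∈ Ω and every t ≥ 0 one has T t (F λ) = exp(t·λ) • F λ, and (ii) for every continuous linear functional φ on B the map λ ↦ φ(F λ) is holomorphic on Ω. Then, setting V equal to the closure of the linear span of {F λ : λ ∈ Ω}, the subspace V is a nonzero closed subspace of B, V is invariant under every T t, and the restriction of T to V is chaotic: there exists g ∈ V whose orbit {T t g : t ≥ 0} is dense in V, and the set {f ∈ V : ∃ t > 0, T t f = f} is dense in V. In particular T is subspace chaotic. -/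

import Mathlib

open Filter Topology Set

namespace BMaux

variable {B : Type*} [NormedAddCommGroup B] [NormedSpace ℂ B]

/-- Hahn–Banach separation: a point outside the closure of a complex subspace is
separated from it by a continuous linear functional vanishing on the subspace. -/
lemma exists_functional {W : Submodule ℂ B} {x : B}
    (hx : x ∉ closure (W : Set B)) :
    ∃ φ : B →L[ℂ] ℂ, (∀ w ∈ W, φ w = 0) ∧ φ x ≠ 0 := by
  have hconv : Convex ℝ (closure (W : Set B)) :=
    (Submodule.convex (W.restrictScalars ℝ)).closure
  obtain ⟨φ, u, hu, hb⟩ := RCLike.geometric_hahn_banach_point_closed (𝕜 := ℂ)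
      hconv isClosed_closure hx
  have h0 : (0 : B) ∈ closure (W : Set B) := subset_closure W.zero_mem
  have hu0 : u < 0 := by simpa using hb 0 h0
  refine ⟨φ, ?_, ?_⟩
  · intro w hw
    by_contra hne
    have hmem : ((((u - 1 : ℝ) : ℂ)) * (φ w)⁻¹) • w ∈ W := W.smul_mem _ hw
    have h2 := hb _ (subset_closure hmem)
    rw [map_smul, smul_eq_mul, mul_assoc, inv_mul_cancel₀ hne, mul_one] at h2
    simp only [RCLike.re_to_complex, Complex.ofReal_re] at h2
    linarith
  · intro h
    rw [h] at hu
    simp only [map_zero, RCLike.re_to_complex, Complex.zero_re] at hu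
    linarith

/-- Elements of the span of an image are finite combinations. -/
lemma span_image_rep {S : Set ℂ} {F : ℂ → B} {x : B}
    (hx : x ∈ Submodule.span ℂ (F '' S)) :
    ∃ (n : ℕ) (c : Fin n → ℂ) (z : Fin n → ℂ), (∀ i, z i ∈ S) ∧
      x = ∑ i, c i • F (z i) := by
  obtain ⟨n, c, g, hg⟩ := Submodule.mem_span_set'.1 hx
  choose z hzS hzF using fun i => (g i).2
  exact ⟨n, c, z, hzS, by rw [← hg]; exact Finset.sum_congr rfl fun i _ => by rw [hzF]⟩

lemma tendsto_exp_smul_zero {μ : ℂ} (hμ : μ.re < 0) (v : B) :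
    Tendsto (fun t : ℝ => Complex.exp ((t : ℂ) * μ) • v) atTop (𝓝 0) := by
  rw [tendsto_zero_iff_norm_tendsto_zero]
  have hnorm : ∀ t : ℝ, ‖Complex.exp ((t : ℂ) * μ) • v‖ = Real.exp (t * μ.re) * ‖v‖ := by
    intro t
    rw [norm_smul, Complex.norm_exp]
    congr 2
    simp [Complex.mul_re]
  simp only [hnorm]
  have h1 : Tendsto (fun t : ℝ => t * μ.re) atTop atBot :=
    tendsto_id.atTop_mul_const_of_neg hμ
  have h2 : Tendsto (fun t : ℝ => Real.exp (t * μ.re)) atTop (𝓝 0) :=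
    Real.tendsto_exp_atBot.comp h1
  simpa using h2.mul_const ‖v‖

lemma rat_mul_den (q : ℚ) : q * (q.den : ℚ) = (q.num : ℚ) := by
  have h : (q.den : ℚ) ≠ 0 := Nat.cast_ne_zero.2 q.den_nz
  nth_rewrite 1 [← Rat.num_div_den q]
  rw [div_mul_cancel₀ _ h]

/-- Identity-theorem based density: the span over a subset with an accumulation
point is dense in the span over all of `Ω`. -/
lemma dense_span_sub {Ω : Set ℂ} (hΩopen : IsOpen Ω) (hΩconn : IsPreconnected Ω)
    {F : ℂ → B} (hHol : ∀ φ : B →L[ℂ] ℂ, DifferentiableOn ℂ (fun z => φ (F z)) Ω)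
    {S : Set ℂ} {z₀ : ℂ} (hz₀ : z₀ ∈ Ω)
    (hfreq : ∃ᶠ z in 𝓝[≠] z₀, z ∈ S)
    {x : B} (hx : x ∈ (Submodule.span ℂ (F '' Ω)).topologicalClosure) :
    x ∈ closure ((Submodule.span ℂ (F '' (S ∩ Ω)) : Submodule ℂ B) : Set B) := by
  by_contra h
  obtain ⟨φ, hφ0, hφx⟩ := exists_functional h
  have hAnal : AnalyticOnNhd ℂ (fun z => φ (F z)) Ω := (hHol φ).analyticOnNhd hΩopen
  have hΩnhds : Ω ∈ 𝓝 z₀ := hΩopen.mem_nhds hz₀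
  have hfreq' : ∃ᶠ z in 𝓝[≠] z₀, z ∈ S ∩ Ω := by
    have : ∀ᶠ z in 𝓝[≠] z₀, z ∈ Ω :=
      eventually_nhdsWithin_of_eventually_nhds (eventually_of_mem hΩnhds fun z hz => hz)
    exact (hfreq.and_eventually this)
  have hfz : ∃ᶠ z in 𝓝[≠] z₀, φ (F z) = 0 :=
    hfreq'.mono fun z hz => hφ0 _ (Submodule.subset_span ⟨z, hz, rfl⟩)
  have hzero : EqOn (fun z => φ (F z)) 0 Ω :=
    hAnal.eqOn_zero_of_preconnected_of_frequently_eq_zero hΩconn hz₀ hfz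
  have hker : Submodule.span ℂ (F '' Ω) ≤ LinearMap.ker (φ : B →ₗ[ℂ] ℂ) := by
    rw [Submodule.span_le]
    rintro _ ⟨z, hz, rfl⟩
    exact hzero hz
  have hle : (Submodule.span ℂ (F '' Ω)).topologicalClosure ≤ LinearMap.ker (φ : B →ₗ[ℂ] ℂ) :=
    Submodule.topologicalClosure_minimal _ hker (ContinuousLinearMap.isClosed_ker φ)
  exact hφx (hle hx)

end BMaux

/-- **Banasiak–Moszyński subspace chaos criterion.** If a C₀-semigroup on a separable
complex Banach space admits a not-identically-zero weakly holomorphic eigenvector field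
`F : Ω → B` over an open connected `Ω ⊆ ℂ` meeting the imaginary axis, then the closed
subspace `V = closure (span (F '' Ω))` is nonzero, invariant under the semigroup, and the
restricted semigroup is chaotic on `V`: some orbit is dense in `V` and periodic points of
the restriction are dense in `V`. In particular the semigroup is subspace chaotic. -/
theorem banasiak_moszynski_subspace_chaos
    {B : Type*} [NormedAddCommGroup B] [NormedSpace ℂ B] [CompleteSpace B]
    [TopologicalSpace.SeparableSpace B]
    (T : ℝ → B →L[ℂ] B)
    (hT0 : T 0 = 1)
    (hTadd : ∀ s t : ℝ, 0 ≤ s → 0 ≤ t → T (s + t) = (T s).comp (T t))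
    (hTcont : ∀ f : B, ContinuousOn (fun t => T t f) (Set.Ici (0 : ℝ)))
    (Ω : Set ℂ) (hΩopen : IsOpen Ω) (hΩconn : IsConnected Ω)
    (hΩim : ∃ y : ℝ, (Complex.I * (y : ℂ)) ∈ Ω)
    (F : ℂ → B) (hFne : ∃ z ∈ Ω, F z ≠ 0)
    (hEig : ∀ z ∈ Ω, ∀ t : ℝ, 0 ≤ t → T t (F z) = Complex.exp ((t : ℂ) * z) • F z)
    (hHol : ∀ φ : B →L[ℂ] ℂ, DifferentiableOn ℂ (fun z => φ (F z)) Ω)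
    (V : Submodule ℂ B)
    (hV : V = (Submodule.span ℂ (F '' Ω)).topologicalClosure) :
    V ≠ ⊥ ∧
      (∀ t : ℝ, 0 ≤ t → ∀ f ∈ V, T t f ∈ V) ∧
      (∃ g ∈ V, ∀ x ∈ V, x ∈ closure ((fun t => T t g) '' Set.Ici (0 : ℝ))) ∧
      (∀ x ∈ V, x ∈ closure {f : B | f ∈ V ∧ ∃ t : ℝ, 0 < t ∧ T t f = f}) := by
  obtain ⟨y₀, hy₀⟩ := hΩim
  set z₀ : ℂ := Complex.I * (y₀ : ℂ) with hz₀def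
  have hVdef : (V : Set B) = closure ((Submodule.span ℂ (F '' Ω) : Submodule ℂ B) : Set B) := by
    rw [hV]; rfl
  have hVclosed : IsClosed (V : Set B) := by rw [hVdef]; exact isClosed_closure
  have hspan_le_V : Submodule.span ℂ (F '' Ω) ≤ V := by
    rw [hV]; exact Submodule.le_topologicalClosure _
  -- specialized density lemma
  have hdense : ∀ (S : Set ℂ) (w₀ : ℂ), w₀ ∈ Ω → (∃ᶠ z in 𝓝[≠] w₀, z ∈ S) →
      ∀ x ∈ V, x ∈ closure ((Submodule.span ℂ (F '' (S ∩ Ω)) : Submodule ℂ B) : Set B) := by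
    intro S w₀ hw₀ hfreq x hx
    exact BMaux.dense_span_sub hΩopen hΩconn.isPreconnected hHol hw₀ hfreq (hV ▸ hx)
  -- points with positive and negative real part in Ω
  obtain ⟨ε, hε, hball⟩ := Metric.isOpen_iff.1 hΩopen _ hy₀
  have hz₀re : z₀.re = 0 := by simp [hz₀def]
  set pp : ℂ := z₀ + ((ε / 2 : ℝ) : ℂ) with hppdef
  set pm : ℂ := z₀ - ((ε / 2 : ℝ) : ℂ) with hpmdef
  have hdist : ∀ c : ℂ, dist (z₀ + c) z₀ = ‖c‖ := by
    intro c; rw [Complex.dist_eq, add_sub_cancel_left]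
  have hppΩ : pp ∈ Ω := by
    apply hball
    rw [Metric.mem_ball, hppdef, hdist]
    rw [Complex.norm_real, Real.norm_eq_abs, abs_of_pos (by linarith)]
    linarith
  have hpmΩ : pm ∈ Ω := by
    apply hball
    rw [Metric.mem_ball, hpmdef, sub_eq_add_neg, ← Complex.ofReal_neg, hdist]
    rw [Complex.norm_real, Real.norm_eq_abs, abs_of_neg (by linarith), neg_neg]
    linarith
  have hppre : 0 < pp.re := by simp [hppdef, hz₀re]; linarith
  have hpmre : pm.re < 0 := by simp [hpmdef, hz₀re]; linarith
  -- sets of eigenvalue parameters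
  set Spos : Set ℂ := {z | 0 < z.re} with hSposdef
  set Sneg : Set ℂ := {z | z.re < 0} with hSnegdef
  set Srat : Set ℂ := {z | ∃ q : ℚ, z = Complex.I * (q : ℂ)} with hSratdef
  have hfreq_open : ∀ (S : Set ℂ) (w : ℂ), IsOpen S → w ∈ S → ∃ᶠ z in 𝓝[≠] w, z ∈ S := by
    intro S w hS hw
    exact ((eventually_nhdsWithin_of_eventually_nhds
      (eventually_of_mem (hS.mem_nhds hw) fun z hz => hz))).frequently
  have hfreqp : ∃ᶠ z in 𝓝[≠] pp, z ∈ Spos :=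
    hfreq_open _ _ (isOpen_lt continuous_const Complex.continuous_re) hppre
  have hfreqm : ∃ᶠ z in 𝓝[≠] pm, z ∈ Sneg :=
    hfreq_open _ _ (isOpen_lt Complex.continuous_re continuous_const) hpmre
  -- rational frequencies accumulate at z₀
  have hfreqq : ∃ᶠ z in 𝓝[≠] z₀, z ∈ Srat := by
    have hq : ∀ n : ℕ, ∃ q : ℚ, y₀ < (q : ℝ) ∧ (q : ℝ) < y₀ + 1 / (n + 1) := by
      intro n
      exact exists_rat_btwn (lt_add_of_pos_right y₀ (by positivity))
    choose q hq1 hq2 using hq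
    have hqlim : Tendsto (fun n : ℕ => ((q n : ℝ))) atTop (𝓝 y₀) := by
      have hup : Tendsto (fun n : ℕ => y₀ + 1 / ((n : ℝ) + 1)) atTop (𝓝 (y₀ + 0)) :=
        tendsto_const_nhds.add tendsto_one_div_add_atTop_nhds_zero_nat
      rw [add_zero] at hup
      exact tendsto_of_tendsto_of_tendsto_of_le_of_le tendsto_const_nhds hup
        (fun n => (hq1 n).le) (fun n => (hq2 n).le)
    have hlim : Tendsto (fun n : ℕ => Complex.I * ((q n : ℝ) : ℂ)) atTop (𝓝 z₀) := by
      rw [hz₀def]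
      exact (Complex.continuous_ofReal.tendsto y₀).comp hqlim |>.const_mul Complex.I
    have hne : ∀ n : ℕ, Complex.I * ((q n : ℝ) : ℂ) ≠ z₀ := by
      intro n h
      rw [hz₀def] at h
      have := mul_left_cancel₀ Complex.I_ne_zero h
      have : ((q n : ℝ)) = y₀ := by exact_mod_cast this
      linarith [hq1 n]
    have hlim' : Tendsto (fun n : ℕ => Complex.I * ((q n : ℝ) : ℂ)) atTop (𝓝[≠] z₀) := by
      rw [tendsto_nhdsWithin_iff]
      exact ⟨hlim, Eventually.of_forall hne⟩
    apply hlim'.frequently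
    apply Frequently.of_forall
    intro n
    exact ⟨q n, by push_cast; ring⟩
  -- invariance
  have hinv : ∀ t : ℝ, 0 ≤ t → ∀ f ∈ V, T t f ∈ V := by
    intro t ht f hf
    have hmap : MapsTo (T t) ((Submodule.span ℂ (F '' Ω) : Submodule ℂ B) : Set B)
        ((Submodule.span ℂ (F '' Ω) : Submodule ℂ B) : Set B) := by
      intro y hy
      simp only [SetLike.mem_coe] at hy ⊢
      induction hy using Submodule.span_induction with
      | mem w hw =>
        obtain ⟨z, hz, rfl⟩ := hw
        rw [hEig z hz t ht]
        exact Submodule.smul_mem _ _ (Submodule.subset_span ⟨z, hz, rfl⟩)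
      | zero => simp
      | add a b _ _ ha hb => rw [map_add]; exact Submodule.add_mem _ ha hb
      | smul a w _ hw => rw [map_smul]; exact Submodule.smul_mem _ _ hw
    rw [← SetLike.mem_coe, hVdef] at hf ⊢
    exact map_mem_closure (T t).continuous hf hmap
  -- nontriviality
  have hVne : V ≠ ⊥ := by
    obtain ⟨z, hz, hFz⟩ := hFne
    have hmem : F z ∈ V := hspan_le_V (Submodule.subset_span ⟨z, hz, rfl⟩)
    intro hbot
    rw [hbot, Submodule.mem_bot] at hmem
    exact hFz hmem
  refine ⟨hVne, hinv, ?_, ?_⟩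
  · -- dense orbit via Baire category
    haveI : CompleteSpace ↥V := hVclosed.completeSpace_coe
    haveI : SecondCountableTopology B := UniformSpace.secondCountable_of_separable B
    haveI : Nonempty ↥V := ⟨0⟩
    obtain ⟨d, hd⟩ := TopologicalSpace.exists_dense_seq ↥V
    set G : ℕ × ℕ → Set ↥V := fun p =>
      {g | ∃ t : ℝ, 0 ≤ t ∧ ‖T t (g : B) - (d p.1 : B)‖ < 1 / (p.2 + 1)} with hGdef
    have hGopen : ∀ p, IsOpen (G p) := by
      intro p
      have : G p = ⋃ t : {t : ℝ // 0 ≤ t},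
          (fun g : ↥V => T t.1 (g : B)) ⁻¹' Metric.ball (d p.1 : B) (1 / (p.2 + 1)) := by
        ext g
        simp only [hGdef, mem_setOf_eq, mem_iUnion, mem_preimage, Metric.mem_ball, dist_eq_norm]
        constructor
        · rintro ⟨t, ht, h⟩; exact ⟨⟨t, ht⟩, h⟩
        · rintro ⟨⟨t, ht⟩, h⟩; exact ⟨t, ht, h⟩
      rw [this]
      exact isOpen_iUnion fun t =>
        Metric.isOpen_ball.preimage ((T t.1).continuous.comp continuous_subtype_val)
    have hGdense : ∀ p, Dense (G p) := by
      intro p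
      rw [Metric.dense_iff]
      intro v r hr
      have hεp : (0 : ℝ) < 1 / ((p.2 : ℝ) + 1) := by positivity
      -- approximate v from span over Sneg ∩ Ω
      have h1 := hdense Sneg pm hpmΩ hfreqm (v : B) v.2
      rw [Metric.mem_closure_iff] at h1
      obtain ⟨u', hu'mem, hu'⟩ := h1 (r / 2) (by linarith)
      rw [SetLike.mem_coe] at hu'mem
      -- approximate d p.1 from span over Spos ∩ Ω
      have h2 := hdense Spos pp hppΩ hfreqp (d p.1 : B) (d p.1).2
      rw [Metric.mem_closure_iff] at h2
      obtain ⟨w, hwmem, hw⟩ := h2 (1 / ((p.2 : ℝ) + 1) / 2) (by positivity)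
      rw [SetLike.mem_coe] at hwmem
      obtain ⟨m₁, a, lam, hlamS, hu'eq⟩ := BMaux.span_image_rep hu'mem
      obtain ⟨m₂, b, mu, hmuS, hweq⟩ := BMaux.span_image_rep hwmem
      set wt : ℝ → B := fun t =>
        ∑ j, (b j * Complex.exp (-(t : ℂ) * mu j)) • F (mu j) with hwtdef
      have hwt0 : Tendsto wt atTop (𝓝 0) := by
        have : Tendsto wt atTop (𝓝 (∑ j : Fin m₂, (0 : B))) := by
          apply tendsto_finset_sum
          intro j _
          have hre : (-(mu j)).re < 0 := by
            have := (hmuS j).1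
            simp only [hSposdef, mem_setOf_eq] at this
            simp [this]
          have hterm := (BMaux.tendsto_exp_smul_zero hre (F (mu j))).const_smul (b j)
          rw [smul_zero] at hterm
          apply hterm.congr
          intro t
          rw [smul_smul]
          congr 1
          rw [mul_comm ((t : ℂ)) (-(mu j))]
          ring_nf
        simpa using this
      have hTu' : Tendsto (fun t : ℝ => T t u') atTop (𝓝 0) := by
        have hmain : Tendsto (fun t : ℝ =>
            ∑ i, a i • (Complex.exp ((t : ℂ) * lam i) • F (lam i))) atTop
            (𝓝 (∑ i : Fin m₁, (0 : B))) := by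
          apply tendsto_finset_sum
          intro i _
          have hre : (lam i).re < 0 := (hlamS i).1
          have := (BMaux.tendsto_exp_smul_zero hre (F (lam i))).const_smul (a i)
          rwa [smul_zero] at this
        rw [show (0 : B) = ∑ i : Fin m₁, (0 : B) by simp]
        apply hmain.congr'
        filter_upwards [eventually_ge_atTop (0 : ℝ)] with t ht
        rw [hu'eq, map_sum]
        refine Finset.sum_congr rfl fun i _ => ?_
        rw [map_smul, hEig _ (hlamS i).2 t ht]
      -- choose a good time t
      have hev1 : ∀ᶠ t : ℝ in atTop, ‖wt t‖ < r / 2 := by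
        have := Metric.tendsto_nhds.mp hwt0 (r / 2) (by linarith)
        simpa [dist_zero_right] using this
      have hev2 : ∀ᶠ t : ℝ in atTop, ‖T t u'‖ < 1 / ((p.2 : ℝ) + 1) / 2 := by
        have := Metric.tendsto_nhds.mp hTu' (1 / ((p.2 : ℝ) + 1) / 2) (by positivity)
        simpa [dist_zero_right] using this
      obtain ⟨t, ht0, hwt, hTu⟩ := ((eventually_ge_atTop (0 : ℝ)).and (hev1.and hev2)).exists
      -- the approximate point
      set g : B := u' + wt t with hgdef
      have hg_mem : g ∈ V := by
        apply V.add_mem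
        · exact hspan_le_V ((Submodule.span_mono (Set.image_mono Set.inter_subset_right)) hu'mem)
        · apply hspan_le_V
          apply Submodule.sum_mem
          intro j _
          exact Submodule.smul_mem _ _
            (Submodule.subset_span ⟨mu j, ((hmuS j).2 : mu j ∈ Ω), rfl⟩)
      refine ⟨⟨g, hg_mem⟩, ?_, ?_⟩
      · rw [Metric.mem_ball, Subtype.dist_eq]
        calc dist g (v : B) = ‖(u' - (v : B)) + wt t‖ := by
              rw [dist_eq_norm, hgdef]; congr 1; abel
        _ ≤ ‖u' - (v : B)‖ + ‖wt t‖ := norm_add_le _ _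
        _ < r / 2 + r / 2 := by
            apply add_lt_add _ hwt
            rw [← dist_eq_norm, dist_comm]
            exact hu'
        _ = r := by ring
      · refine ⟨t, ht0, ?_⟩
        have hTwt : T t (wt t) = w := by
          rw [hwtdef]
          simp only
          rw [map_sum, hweq]
          refine Finset.sum_congr rfl fun j _ => ?_
          rw [map_smul, hEig _ ((hmuS j).2) t ht0, smul_smul]
          congr 1
          rw [mul_assoc, ← Complex.exp_add]
          simp
        have : T t g = T t u' + w := by rw [hgdef, map_add, hTwt]
        rw [this]
        calc ‖T t u' + w - (d p.1 : B)‖ = ‖T t u' + (w - (d p.1 : B))‖ := by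
              congr 1; abel
        _ ≤ ‖T t u'‖ + ‖w - (d p.1 : B)‖ := norm_add_le _ _
        _ < 1 / ((p.2 : ℝ) + 1) / 2 + 1 / ((p.2 : ℝ) + 1) / 2 := by
            apply add_lt_add hTu
            rw [← dist_eq_norm, dist_comm]
            exact hw
        _ = 1 / ((p.2 : ℝ) + 1) := by ring
    haveI : BaireSpace ↥V := BaireSpace.of_completelyPseudoMetrizable
    have hBaire : Dense (⋂ p, G p) := dense_iInter_of_isOpen hGopen hGdense
    obtain ⟨g₀, hg₀⟩ := hBaire.nonempty
    refine ⟨(g₀ : B), g₀.2, ?_⟩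
    intro x hx
    rw [Metric.mem_closure_iff]
    intro δ hδ
    obtain ⟨n, hn⟩ := Metric.denseRange_iff.mp hd ⟨x, hx⟩ (δ / 2) (by linarith)
    obtain ⟨k, hk⟩ := exists_nat_one_div_lt (half_pos hδ)
    have hg := mem_iInter.mp hg₀ (n, k)
    obtain ⟨t, ht0, htlt⟩ := hg
    refine ⟨T t (g₀ : B), ⟨t, ht0, rfl⟩, ?_⟩
    have hdx : dist x (d n : B) < δ / 2 := by
      rw [← Subtype.dist_eq (p := fun y => y ∈ V) ⟨x, hx⟩ (d n)]
      exact hn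
    calc dist x (T t (g₀ : B)) ≤ dist x (d n : B) + dist (d n : B) (T t (g₀ : B)) :=
          dist_triangle _ _ _
    _ < δ / 2 + δ / 2 := by
        apply add_lt_add hdx
        rw [dist_comm, dist_eq_norm]
        calc ‖T t (g₀ : B) - (d n : B)‖ < 1 / ((k : ℝ) + 1) := htlt
        _ < δ / 2 := hk
    _ = δ := by ring
  · -- dense periodic points
    intro x hx
    have hdq := hdense Srat z₀ hy₀ hfreqq x hx
    refine closure_mono ?_ hdq
    intro f hf
    rw [SetLike.mem_coe] at hf
    obtain ⟨m, c, z, hzS, rfl⟩ := BMaux.span_image_rep hf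
    constructor
    · apply hspan_le_V
      apply Submodule.sum_mem
      intro i _
      exact Submodule.smul_mem _ _ (Submodule.subset_span ⟨z i, (hzS i).2, rfl⟩)
    · choose q hq using fun i => (hzS i).1
      set N : ℕ := ∏ i, (q i).den with hNdef
      have hN : 0 < (N : ℝ) := by
        have : 0 < N := Finset.prod_pos fun i _ => (q i).pos
        exact_mod_cast this
      refine ⟨2 * Real.pi * N, by positivity, ?_⟩
      rw [map_sum]
      refine Finset.sum_congr rfl fun i _ => ?_
      rw [map_smul, hEig _ (hzS i).2 _ (by positivity)]
      have hexp : Complex.exp (((2 * Real.pi * N : ℝ) : ℂ) * z i) = 1 := by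
        obtain ⟨k', hk'⟩ := Finset.dvd_prod_of_mem (fun i => (q i).den) (Finset.mem_univ i)
        have hqN : (q i : ℚ) * (N : ℚ) = (((q i).num * (k' : ℤ) : ℤ) : ℚ) := by
          rw [hNdef]
          push_cast [hk']
          rw [← mul_assoc, BMaux.rat_mul_den]
        have hC : ((q i : ℂ)) * (N : ℂ) = (((q i).num : ℂ)) * ((k' : ℕ) : ℂ) := by
          exact_mod_cast congrArg (fun r : ℚ => (r : ℂ)) hqN
        have harg : ((2 * Real.pi * N : ℝ) : ℂ) * z i =
            ((((q i).num * (k' : ℤ) : ℤ) : ℂ)) * (2 * (Real.pi : ℂ) * Complex.I) := by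
          rw [hq i]
          push_cast
          linear_combination (2 * (Real.pi : ℂ) * Complex.I) * hC
        rw [harg]
        exact Complex.exp_int_mul_two_pi_mul_I _
      rw [hexp, one_smul]
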